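/- Massart's lemma: if A ⊆ ℝ^n is a finite set with max_{a∈A} ‖a‖₂ ≤ r, then E_σ[max_{a∈A} (1/n) Σ_{i=1}^n σ_i a_i] ≤ r√(2 log|A|)/n, where σ_1, ..., σ_n are i.i.d. Rademacher variables. -/

import Mathlib

open Finset

private lemma massart_sum_sign_zero {n : ℕ} (i : Fin n) :
    ∑ σ : Fin n → Bool, (if σ i then (1:ℝ) else -1) = 0 := by
  apply Finset.sum_ninvolution (fun σ => Function.update σ i (!(σ i)))
  · intro σ; cases h : σ i <;> simp [h]
  · intro σ _ hcontra
    have := congrFun hcontra i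
    simp at this
  · intro σ; exact Finset.mem_univ _
  · intro σ
    funext j
    by_cases hj : j = i
    · subst hj; simp
    · simp [Function.update_of_ne hj]

private lemma massart_prod_bound {n : ℕ} (l r : ℝ) (a : EuclideanSpace ℝ (Fin n))
    (ha : ‖a‖ ≤ r) :
    ∏ i, (Real.exp (l * a i) + Real.exp (-(l * a i)))
      ≤ 2 ^ n * Real.exp (l ^ 2 * r ^ 2 / 2) := by
  have h1 : ∀ i : Fin n, Real.exp (l * a i) + Real.exp (-(l * a i))
      ≤ 2 * Real.exp ((l * a i) ^ 2 / 2) := by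
    intro i
    have := Real.cosh_le_exp_half_sq (l * a i)
    rw [Real.cosh_eq] at this
    linarith
  calc ∏ i, (Real.exp (l * a i) + Real.exp (-(l * a i)))
      ≤ ∏ i, 2 * Real.exp ((l * a i) ^ 2 / 2) := by
        apply Finset.prod_le_prod (fun i _ => by positivity) (fun i _ => h1 i)
    _ = 2 ^ n * Real.exp (∑ i, (l * a i) ^ 2 / 2) := by
        rw [Finset.prod_mul_distrib, Finset.prod_const, Real.exp_sum]
        simp
    _ ≤ 2 ^ n * Real.exp (l ^ 2 * r ^ 2 / 2) := by
        gcongr 2 ^ n * Real.exp ?_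
        have hnorm : ∑ i, (a i) ^ 2 = ‖a‖ ^ 2 := by
          rw [EuclideanSpace.norm_eq, Real.sq_sqrt (by positivity)]
          simp [sq_abs]
        have h2 : ∑ i, (l * a i) ^ 2 / 2 = l ^ 2 * (∑ i, (a i) ^ 2) / 2 := by
          rw [Finset.mul_sum, Finset.sum_div]
          congr 1; funext i; ring
        rw [h2, hnorm]
        have : ‖a‖ ^ 2 ≤ r ^ 2 :=
          pow_le_pow_left₀ (norm_nonneg a) ha 2
        nlinarith [sq_nonneg l]

private lemma massart_mgf {n : ℕ} (l : ℝ) (a : EuclideanSpace ℝ (Fin n)) :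
    ∑ σ : Fin n → Bool, Real.exp (l * ∑ i, (if σ i then (1:ℝ) else -1) * a i)
      = ∏ i, (Real.exp (l * a i) + Real.exp (-(l * a i))) := by
  have h : ∀ σ : Fin n → Bool, Real.exp (l * ∑ i, (if σ i then (1:ℝ) else -1) * a i)
      = ∏ i, Real.exp (l * ((if σ i then (1:ℝ) else -1) * a i)) := by
    intro σ; rw [Finset.mul_sum, Real.exp_sum]
  simp_rw [h]
  rw [← Fintype.prod_sum (fun i (b : Bool) => Real.exp (l * ((if b then (1:ℝ) else -1) * a i)))]
  congr 1; funext i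
  rw [Fintype.sum_bool]
  simp [mul_comm, mul_assoc]

/-- Abstract core of Massart's lemma. -/
private lemma massart_abstract {Ω α : Type*} [Fintype Ω] (A : Finset α) (hA : A.Nonempty)
    (S : Ω → α → ℝ) (r : ℝ) (hrpos : 0 < r) (hK2 : 2 ≤ A.card) (hΩ : 0 < Fintype.card Ω)
    (hmgf : ∀ l : ℝ, 0 < l → ∀ a ∈ A,
      ∑ ω : Ω, Real.exp (l * S ω a) ≤ (Fintype.card Ω : ℝ) * Real.exp (l ^ 2 * r ^ 2 / 2)) :
    (1 / (Fintype.card Ω : ℝ)) * ∑ ω : Ω, A.sup' hA (S ω)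
      ≤ r * Real.sqrt (2 * Real.log A.card) := by
  set N : ℝ := (Fintype.card Ω : ℝ) with hNdef
  have hN : 0 < N := by rw [hNdef]; exact_mod_cast hΩ
  set L := Real.log A.card with hLdef
  have hL : 0 < L := Real.log_pos (by exact_mod_cast hK2)
  set l : ℝ := Real.sqrt (2 * L) / r with hldef
  have hsq : Real.sqrt (2 * L) * Real.sqrt (2 * L) = 2 * L :=
    Real.mul_self_sqrt (by linarith)
  have hsqpos : 0 < Real.sqrt (2 * L) := Real.sqrt_pos.2 (by linarith)
  have hl : 0 < l := div_pos hsqpos hrpos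
  set T : ℝ := (1 / N) * ∑ ω : Ω, A.sup' hA (S ω) with hTdef
  have hwsum : ∑ _ω : Ω, (1 / N : ℝ) = 1 := by
    rw [Finset.sum_const, Finset.card_univ, nsmul_eq_mul]
    field_simp
    exact hNdef.symm
  have jensen : Real.exp (l * T) ≤
      ∑ ω : Ω, (1 / N) * Real.exp (l * A.sup' hA (S ω)) := by
    have h := convexOn_exp.map_sum_le (t := (Finset.univ : Finset Ω))
      (w := fun _ => (1 / N : ℝ)) (p := fun ω => l * A.sup' hA (S ω))
      (fun _ _ => by positivity) hwsum (fun _ _ => Set.mem_univ _)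
    have heq : ∑ ω : Ω, (1 / N : ℝ) • (l * A.sup' hA (S ω)) = l * T := by
      have h1 : ∀ ω : Ω, (1 / N : ℝ) • (l * A.sup' hA (S ω))
          = l * ((1 / N) * A.sup' hA (S ω)) := by
        intro ω; rw [smul_eq_mul]; ring
      simp_rw [h1]
      rw [← Finset.mul_sum, ← Finset.mul_sum, hTdef]
    rw [heq] at h
    exact h
  have hMb : ∀ ω : Ω, Real.exp (l * A.sup' hA (S ω)) ≤
      ∑ a ∈ A, Real.exp (l * S ω a) := by
    intro ω
    obtain ⟨aω, haω, hMa⟩ := Finset.exists_mem_eq_sup' hA (S ω)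
    rw [hMa]
    exact Finset.single_le_sum (f := fun a => Real.exp (l * S ω a))
      (fun a _ => (Real.exp_pos _).le) haω
  have expbound : Real.exp (l * T) ≤ A.card * Real.exp (l ^ 2 * r ^ 2 / 2) := by
    calc Real.exp (l * T)
        ≤ ∑ ω : Ω, (1 / N) * Real.exp (l * A.sup' hA (S ω)) := jensen
      _ ≤ ∑ ω : Ω, (1 / N) * ∑ a ∈ A, Real.exp (l * S ω a) := by
          apply Finset.sum_le_sum
          intro ω _
          exact mul_le_mul_of_nonneg_left (hMb ω) (by positivity)
      _ = (1 / N) * ∑ a ∈ A, ∑ ω : Ω, Real.exp (l * S ω a) := by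
          rw [← Finset.mul_sum, Finset.sum_comm]
      _ ≤ (1 / N) * ∑ _a ∈ A, (N * Real.exp (l ^ 2 * r ^ 2 / 2)) := by
          apply mul_le_mul_of_nonneg_left _ (by positivity)
          exact Finset.sum_le_sum (fun a ha => hmgf l hl a ha)
      _ = A.card * Real.exp (l ^ 2 * r ^ 2 / 2) := by
          rw [Finset.sum_const, nsmul_eq_mul]
          field_simp
  have hlog : l * T ≤ L + l ^ 2 * r ^ 2 / 2 := by
    have hpos : (0:ℝ) < A.card * Real.exp (l ^ 2 * r ^ 2 / 2) := by
      have : (0:ℝ) < A.card := by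
        exact_mod_cast Nat.lt_of_lt_of_le Nat.zero_lt_two hK2
      positivity
    have h := (Real.le_log_iff_exp_le hpos).2 expbound
    rwa [Real.log_mul (by positivity) (Real.exp_ne_zero _), Real.log_exp] at h
  have hl2 : l ^ 2 * r ^ 2 / 2 = L := by
    have hsq2 : Real.sqrt (2 * L) ^ 2 = 2 * L := Real.sq_sqrt (by linarith)
    rw [hldef, div_pow, hsq2]
    field_simp
  rw [hl2] at hlog
  have h2 : T ≤ 2 * L / l := by
    rw [le_div_iff₀ hl]
    linarith
  have h3 : 2 * L / l = r * Real.sqrt (2 * L) := by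
    rw [hldef, div_div_eq_mul_div, div_eq_iff (ne_of_gt hsqpos)]
    nlinarith [hsq]
  calc T ≤ 2 * L / l := h2
    _ = r * Real.sqrt (2 * L) := h3

/-- Key inequality without the `1/n` factor. -/
private lemma massart_key {n : ℕ}
    (A : Finset (EuclideanSpace ℝ (Fin n))) (hA : A.Nonempty)
    (r : ℝ) (hr : ∀ a ∈ A, ‖a‖ ≤ r) :
    (1 / 2 ^ n : ℝ) * ∑ σ : Fin n → Bool,
        A.sup' hA (fun a => ∑ i, (if σ i then (1 : ℝ) else -1) * a i)
      ≤ r * Real.sqrt (2 * Real.log A.card) := by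
  obtain ⟨a0, ha0⟩ := id hA
  have hr0 : 0 ≤ r := le_trans (norm_nonneg a0) (hr a0 ha0)
  by_cases hK1 : A.card = 1
  · -- singleton case: LHS = 0
    obtain ⟨a, rfl⟩ := Finset.card_eq_one.1 hK1
    have h : ∀ σ : Fin n → Bool,
        ({a} : Finset (EuclideanSpace ℝ (Fin n))).sup' hA
          (fun a => ∑ i, (if σ i then (1 : ℝ) else -1) * a i)
        = ∑ i, (if σ i then (1 : ℝ) else -1) * a i := fun σ => Finset.sup'_singleton ..
    simp_rw [h]
    rw [Finset.sum_comm]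
    have hz : ∀ i : Fin n, ∑ σ : Fin n → Bool, (if σ i then (1:ℝ) else -1) * a i = 0 := by
      intro i
      rw [← Finset.sum_mul, massart_sum_sign_zero, zero_mul]
    simp_rw [hz]
    simp only [Finset.sum_const_zero, mul_zero]
    positivity
  · have hK2 : 2 ≤ A.card := by
      have := Finset.card_pos.2 ⟨a0, ha0⟩
      omega
    by_cases hr' : r = 0
    · -- all vectors are zero
      subst hr'
      have hz : ∀ a ∈ A, (a : EuclideanSpace ℝ (Fin n)) = 0 := fun a ha =>
        norm_le_zero_iff.1 (hr a ha)
      have hsup : ∀ σ : Fin n → Bool,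
          A.sup' hA (fun a => ∑ i, (if σ i then (1 : ℝ) else -1) * a i) = 0 := by
        intro σ
        rw [show (0:ℝ) = A.sup' hA (fun _ => (0:ℝ)) from (Finset.sup'_const hA 0).symm]
        apply Finset.sup'_congr hA rfl
        intro a ha
        rw [hz a ha]
        simp
      simp_rw [hsup]
      simp
    · have hrpos : 0 < r := lt_of_le_of_ne hr0 (Ne.symm hr')
      have hcard : Fintype.card (Fin n → Bool) = 2 ^ n := by
        simp [Fintype.card_fun]
      have habs := massart_abstract (Ω := Fin n → Bool) A hA
        (fun (σ : Fin n → Bool) (a : EuclideanSpace ℝ (Fin n)) =>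
          ∑ i, (if σ i then (1 : ℝ) else -1) * a i) r hrpos hK2
        (by rw [hcard]; positivity)
        (by
          intro l hl a ha
          rw [hcard]
          push_cast
          calc ∑ σ : Fin n → Bool,
              Real.exp (l * ∑ i, (if σ i then (1:ℝ) else -1) * a i)
              = ∏ i, (Real.exp (l * a i) + Real.exp (-(l * a i))) := massart_mgf l a
            _ ≤ 2 ^ n * Real.exp (l ^ 2 * r ^ 2 / 2) := massart_prod_bound l r a (hr a ha))
      rw [hcard] at habs
      push_cast at habs
      exact habs

/-- Massart's finite class lemma: if `A ⊆ ℝ^n` is a nonempty finite set with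
`max_{a∈A} ‖a‖₂ ≤ r`, then `E_σ[max_{a∈A} (1/n) ∑ i σ_i a_i] ≤ r √(2 log |A|) / n`,
where the `σ_i` are i.i.d. Rademacher variables (expectation written as an average
over all sign vectors). -/
theorem massart_lemma {n : ℕ} (hn : 0 < n)
    (A : Finset (EuclideanSpace ℝ (Fin n))) (hA : A.Nonempty)
    (r : ℝ) (hr : ∀ a ∈ A, ‖a‖ ≤ r) :
    (1 / 2 ^ n : ℝ) * ∑ σ : Fin n → Bool,
        A.sup' hA (fun a => (1 / n : ℝ) * ∑ i, (if σ i then (1 : ℝ) else -1) * a i)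
      ≤ r * Real.sqrt (2 * Real.log A.card) / n := by
  have hn' : (0:ℝ) < n := by exact_mod_cast hn
  have hsup : ∀ σ : Fin n → Bool,
      A.sup' hA (fun a => (1 / n : ℝ) * ∑ i, (if σ i then (1 : ℝ) else -1) * a i)
      = (1 / n : ℝ) * A.sup' hA (fun a => ∑ i, (if σ i then (1 : ℝ) else -1) * a i) := by
    intro σ
    exact (Finset.comp_sup'_eq_sup'_comp hA (fun x : ℝ => (1 / n : ℝ) * x)
      (fun x y => mul_max_of_nonneg x y (by positivity))).symm
  simp_rw [hsup]
  rw [← Finset.mul_sum, ← mul_assoc, mul_comm ((1:ℝ)/2^n) ((1:ℝ)/n), mul_assoc]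
  rw [div_eq_mul_one_div (r * Real.sqrt (2 * Real.log A.card)) (n:ℝ), mul_comm _ ((1:ℝ)/(n:ℝ))]
  exact mul_le_mul_of_nonneg_left (massart_key A hA r hr) (by positivity)
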